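/- Let H = (V,E) be an intersection-closed hypergraph with L(H) ≤ d+1 on n vertices. Then |E| ≤ 1 + ∑_{i=0}^{d} C(n,i), where C(n,i) is the binomial coefficient. -/

import Mathlib

/-- For an intersection-closed hypergraph on `n` vertices with `L(H) ≤ d+1`, the
number of edges is at most `1 + ∑_{i=0}^{d} C(n,i)`. -/
theorem stmt_8 {α : Type*} [Fintype α] (E : Set (Set α))
    (hcl : Set.univ ∈ E ∧ ∀ a ∈ E, ∀ b ∈ E, a ∩ b ∈ E)
    (d : ℕ)
    (hL : ∀ (l : ℕ) (c : Fin (l+1) → Set α),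
      (∀ i, c i ∈ E) → (∀ i j, i < j → c i ⊂ c j) → l ≤ d+1) :
    E.ncard ≤ 1 + ∑ i ∈ Finset.range (d+1), (Fintype.card α).choose i := by
  classical
  obtain ⟨huniv, hclosed⟩ := hcl
  set M : Set α → Set α := fun S => ⋂₀ {e | e ∈ E ∧ S ⊆ e} with hMdef
  have hME : ∀ S : Set α, M S ∈ E := by
    have key : ∀ F : Set (Set α), F.Finite → F ⊆ E → F.Nonempty → ⋂₀ F ∈ E := by
      intro F hF
      refine Set.Finite.induction_on F hF (fun _ h => absurd rfl h.ne_empty) ?_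
      intro a s ha hs ih hsub _
      rw [Set.sInter_insert]
      rcases s.eq_empty_or_nonempty with h | h
      · simp [h, hsub (Set.mem_insert a s)]
      · exact hclosed a (hsub (Set.mem_insert a s)) _
          (ih (fun x hx => hsub (Set.mem_insert_of_mem a hx)) h)
    intro S
    exact key _ ((Set.toFinite E).subset (fun e he => he.1))
      (fun e he => he.1) ⟨Set.univ, huniv, Set.subset_univ S⟩
  have hMsub : ∀ S : Set α, ∀ e ∈ E, S ⊆ e → M S ⊆ e := by
    intro S e he hSe
    exact Set.sInter_subset_of_mem ⟨he, hSe⟩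
  have hsubM : ∀ S : Set α, S ⊆ M S := by
    intro S
    exact Set.subset_sInter (fun e he => he.2)
  have hMmono : ∀ S T : Set α, S ⊆ T → M S ⊆ M T := by
    intro S T hST
    exact Set.sInter_subset_sInter (fun e he => ⟨he.1, hST.trans he.2⟩)
  have hMfix : ∀ e ∈ E, M e = e := by
    intro e he
    exact subset_antisymm (hMsub e e he subset_rfl) (hsubM e)
  have habsorb : ∀ (S : Set α) (x : α), x ∈ M S → M (insert x S) = M S := by
    intro S x hx
    have : {e | e ∈ E ∧ insert x S ⊆ e} = {e | e ∈ E ∧ S ⊆ e} := by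
      ext e
      constructor
      · rintro ⟨he, hsub⟩
        exact ⟨he, (Set.subset_insert x S).trans hsub⟩
      · rintro ⟨he, hsub⟩
        exact ⟨he, Set.insert_subset (hMsub S e he hsub hx) hsub⟩
    simp only [hMdef, this]
  -- key existence
  have hexists : ∀ e ∈ E, e ≠ Set.univ → ∃ S : Finset α, S.card ≤ d ∧ M ↑S = e := by
    intro e he hne
    have hPne : (Finset.univ.filter
        (fun S : Finset α => ↑S ⊆ e ∧ M ↑S = e)).Nonempty := by
      refine ⟨e.toFinset, ?_⟩
      simp only [Finset.mem_filter, Finset.mem_univ, true_and, Set.coe_toFinset]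
      exact ⟨subset_rfl, hMfix e he⟩
    obtain ⟨S, hSP, hmin⟩ := Finset.exists_min_image _ Finset.card hPne
    simp only [Finset.mem_filter, Finset.mem_univ, true_and] at hSP
    obtain ⟨hSe, hSM⟩ := hSP
    refine ⟨S, ?_, hSM⟩
    set m := S.card with hm
    set l := S.toList with hl
    have hlen : l.length = m := S.length_toList
    have hnodup : l.Nodup := S.nodup_toList
    have hltf : l.toFinset = S := S.toList_toFinset
    set c : Fin (m + 2) → Set α :=
      fun i => if (i : ℕ) ≤ m then M ↑((l.take i).toFinset) else Set.univ with hc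
    have hcmem : ∀ i, c i ∈ E := by
      intro i
      by_cases h : (i : ℕ) ≤ m <;> simp [hc, h, hME, huniv]
    have hstep : ∀ i : Fin (m + 1), c i.castSucc ⊂ c i.succ := by
      intro i
      have hi : (i : ℕ) ≤ m := Nat.lt_succ_iff.mp i.isLt
      rcases lt_or_eq_of_le hi with hi' | hi'
      · -- both in the "≤ m" branch
        have hilen : (i : ℕ) < l.length := by omega
        set x := l.get ⟨i, hilen⟩ with hx
        have hxget : l[(i : ℕ)] = x := rfl
        have htake : (l.take ((i : ℕ) + 1)).toFinset =
            insert x (l.take i).toFinset := by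
          rw [List.take_succ, List.getElem?_eq_getElem hilen]
          rw [List.toFinset_append]
          simp only [hxget]
          rw [Finset.union_comm]
          simp [Finset.insert_eq, -Finset.singleton_union]
        have h1 : c i.castSucc = M ↑((l.take (i : ℕ)).toFinset) := by
          show (if (i : ℕ) ≤ m then M ↑((l.take (i : ℕ)).toFinset) else Set.univ) = _
          rw [if_pos hi]
        have h2 : c i.succ = M ↑((l.take ((i : ℕ) + 1)).toFinset) := by
          show (if (i : ℕ) + 1 ≤ m then M ↑((l.take ((i : ℕ) + 1)).toFinset)
            else Set.univ) = _
          rw [if_pos (by omega)]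
        rw [h1, h2]
        have hsub12 : M ↑((l.take (i : ℕ)).toFinset)
            ⊆ M ↑((l.take ((i : ℕ) + 1)).toFinset) := by
          apply hMmono
          rw [htake]
          exact_mod_cast Finset.subset_insert x _
        refine ssubset_of_subset_of_ne hsub12 ?_
        intro heq
        have hxM : x ∈ M ↑((l.take (i : ℕ)).toFinset) := by
          rw [heq]
          apply hsubM
          simp [htake]
        have htsub : ((l.take (i : ℕ)).toFinset : Set α) ⊆ ↑(S.erase x) := by
          intro y hy
          simp only [Finset.mem_coe, List.mem_toFinset] at hy
          obtain ⟨j, hji, hyj⟩ := List.mem_take_iff_getElem.mp hy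
          simp only [Finset.mem_coe, Finset.mem_erase]
          have hjlen : j < l.length := by omega
          constructor
          · intro hxy
            have hgeq : l[j] = l[(i : ℕ)] := by rw [hyj, hxy, hxget]
            have : j = (i : ℕ) := (List.Nodup.getElem_inj_iff hnodup).mp hgeq
            omega
          · rw [← hltf, List.mem_toFinset, ← hyj]
            exact List.getElem_mem _
        have hxM2 : x ∈ M ↑(S.erase x) := hMmono _ _ htsub hxM
        have habs : M (insert x ↑(S.erase x)) = M ↑(S.erase x) := habsorb _ x hxM2
        have hxS : x ∈ S := by
          rw [← hltf, List.mem_toFinset, ← hxget]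
          exact List.getElem_mem _
        have hins : (insert x ↑(S.erase x) : Set α) = ↑S := by
          rw [← Finset.coe_insert, Finset.insert_erase hxS]
        rw [hins, hSM] at habs
        have hle : S.card ≤ (S.erase x).card := by
          apply hmin
          simp only [Finset.mem_filter, Finset.mem_univ, true_and]
          refine ⟨?_, habs.symm⟩
          exact (Finset.coe_subset.mpr (Finset.erase_subset x S)).trans hSe
        rw [Finset.card_erase_of_mem hxS] at hle
        have := Finset.card_pos.mpr ⟨x, hxS⟩
        omega
      · -- final step: M S ⊂ univ
        have htakeall : l.take (i : ℕ) = l := List.take_of_length_le (by omega)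
        have h1 : c i.castSucc = e := by
          show (if (i : ℕ) ≤ m then M ↑((l.take (i : ℕ)).toFinset) else Set.univ) = _
          rw [if_pos hi, htakeall, hltf, hSM]
        have h2 : c i.succ = Set.univ := by
          show (if (i : ℕ) + 1 ≤ m then M ↑((l.take ((i : ℕ) + 1)).toFinset)
            else Set.univ) = _
          rw [if_neg (by omega)]
        rw [h1, h2]
        exact Set.ssubset_univ_iff.mpr hne
    have hchain : ∀ i j : Fin (m + 2), i < j → c i ⊂ c j := by
      have hsm : StrictMono c := by
        rw [Fin.strictMono_iff_lt_succ]
        intro i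
        exact hstep i
      intro i j hij
      exact hsm hij
    have := hL (m + 1) c hcmem hchain
    omega
  -- counting
  have hsubset : E ⊆ insert Set.univ ((fun S : Finset α => M ↑S) ''
      {S : Finset α | S.card ≤ d}) := by
    intro e he
    by_cases h : e = Set.univ
    · exact h ▸ Set.mem_insert _ _
    · obtain ⟨S, hS1, hS2⟩ := hexists e he h
      exact Set.mem_insert_of_mem _ ⟨S, hS1, hS2⟩
  calc E.ncard ≤ (insert Set.univ ((fun S : Finset α => M ↑S) ''
      {S : Finset α | S.card ≤ d})).ncard :=
        Set.ncard_le_ncard hsubset (Set.toFinite _)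
    _ ≤ ((fun S : Finset α => M ↑S) '' {S : Finset α | S.card ≤ d}).ncard + 1 :=
        Set.ncard_insert_le _ _
    _ ≤ {S : Finset α | S.card ≤ d}.ncard + 1 := by
        gcongr
        exact Set.ncard_image_le (Set.toFinite _)
    _ = 1 + {S : Finset α | S.card ≤ d}.ncard := by ring
    _ ≤ _ := by
        gcongr
        have h1 : {S : Finset α | S.card ≤ d} =
            ↑(Finset.univ.filter (fun S : Finset α => S.card ≤ d)) := by
          ext S; simp
        rw [h1, Set.ncard_coe_finset]
        have h2 : Finset.univ.filter (fun S : Finset α => S.card ≤ d) =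
            (Finset.range (d+1)).biUnion
              (fun i => Finset.powersetCard i Finset.univ) := by
          ext S
          simp [Finset.mem_powersetCard_univ, Nat.lt_succ_iff]
        rw [h2, Finset.card_biUnion]
        · apply le_of_eq
          apply Finset.sum_congr rfl
          intro i _
          simp [Finset.card_powersetCard]
        · intro i _ j _ hij
          simp only [Finset.disjoint_left]
          intro S hS hS'
          simp [Finset.mem_powersetCard_univ] at hS hS'
          omega
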